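/- Let f be completely multiplicative with values ±1. Suppose #{m ≤ x−1 : f(m) = −f(m+1)} ≤ x / L(x)^7 where L(x) = exp((log log x)·√(log x)). Let β₁ = exp(10√(log x)), β₂ = L(x)^3, and I = [x/(2β₁), x/β₁]. Then for x sufficiently large, for any primes p, q ≤ β₁ with f(p) = f(q) and 1/2 < p/q < 2, the number of n ∈ I with f(n) = −f(⌊pn/q⌋) is less than |I| / β₂². -/

import Mathlib

/-- If a ±1-valued function differs at `a` and `b`, there is a sign change in between. -/
lemma sign_change_exists (f : ℕ → ℤ)
    (hpm : ∀ n : ℕ, 1 ≤ n → f n = 1 ∨ f n = -1) :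
    ∀ b a : ℕ, 1 ≤ a → a ≤ b → f a ≠ f b →
      ∃ j, a ≤ j ∧ j < b ∧ f j = -f (j + 1) := by
  intro b
  induction b with
  | zero => intro a h1 h2 h3; omega
  | succ b ih =>
    intro a h1 h2 h3
    rcases eq_or_lt_of_le h2 with rfl | h2'
    · exact absurd rfl h3
    · have hb : a ≤ b := by omega
      by_cases hab : f a = f b
      · have hne : f b ≠ f (b + 1) := fun h => h3 (hab.trans h)
        refine ⟨b, hb, Nat.lt_succ_self b, ?_⟩
        rcases hpm b (le_trans h1 hb) with h | h <;>
          rcases hpm (b + 1) (by omega) with h' | h' <;>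
          omega
      · obtain ⟨j, hj1, hj2, hj3⟩ := ih a h1 hb hab
        exact ⟨j, hj1, by omega, hj3⟩

set_option maxHeartbeats 1000000 in
theorem stmt_4 (f : ℕ → ℤ)
    (hmul : ∀ m n : ℕ, f (m * n) = f m * f n)
    (hpm : ∀ n : ℕ, 1 ≤ n → f n = 1 ∨ f n = -1) :
    ∃ X : ℝ, ∀ x : ℝ, X ≤ x →
      (((Finset.Icc 1 ⌊x - 1⌋₊).filter (fun m => f m = -f (m + 1))).card : ℝ) ≤
          x / (Real.exp (Real.log (Real.log x) * Real.sqrt (Real.log x))) ^ 7 →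
      ∀ p q : ℕ, p.Prime → q.Prime →
        (p : ℝ) ≤ Real.exp (10 * Real.sqrt (Real.log x)) →
        (q : ℝ) ≤ Real.exp (10 * Real.sqrt (Real.log x)) →
        f p = f q → 1 / 2 < (p : ℝ) / q → (p : ℝ) / q < 2 →
        (((Finset.Icc 1 ⌊x⌋₊).filter (fun n : ℕ =>
            x / (2 * Real.exp (10 * Real.sqrt (Real.log x))) ≤ (n : ℝ) ∧
            (n : ℝ) ≤ x / Real.exp (10 * Real.sqrt (Real.log x)) ∧
            f n = -f ⌊(p : ℝ) * n / q⌋₊)).card : ℝ) <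
          (x / (2 * Real.exp (10 * Real.sqrt (Real.log x)))) /
            ((Real.exp (Real.log (Real.log x) * Real.sqrt (Real.log x))) ^ 3) ^ 2 := by
  refine ⟨Real.exp (Real.exp 30), ?_⟩
  intro x hx hcount p q hp hq hpβ hqβ hfpq hlow hhigh
  set s : ℝ := Real.sqrt (Real.log x) with hs
  set t : ℝ := Real.log (Real.log x) with ht
  set β : ℝ := Real.exp (10 * s) with hβ
  set L : ℝ := Real.exp (t * s) with hL
  -- basic positivity and size facts
  have hx0 : (0 : ℝ) < x := lt_of_lt_of_le (Real.exp_pos _) hx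
  have hlogx : Real.exp 30 ≤ Real.log x := by
    have := Real.log_le_log (Real.exp_pos _) hx
    rwa [Real.log_exp] at this
  have hlogx0 : (0 : ℝ) < Real.log x := lt_of_lt_of_le (Real.exp_pos _) hlogx
  have he1 : (2 : ℝ) ≤ Real.exp 1 := by nlinarith [Real.add_one_le_exp (1 : ℝ)]
  have h6e5 : (6 : ℝ) ≤ Real.exp 5 := by nlinarith [Real.add_one_le_exp (5 : ℝ)]
  have h36 : (36 : ℝ) ≤ Real.exp 15 := by
    have h : Real.exp 15 = Real.exp 5 * Real.exp 5 * Real.exp 5 := by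
      rw [← Real.exp_add, ← Real.exp_add]; norm_num
    nlinarith [Real.exp_pos (5 : ℝ)]
  have hs15 : Real.exp 15 ≤ s := by
    rw [hs, Real.le_sqrt (le_of_lt (Real.exp_pos _)) (le_of_lt hlogx0)]
    calc Real.exp 15 ^ 2 = Real.exp 30 := by
          rw [sq, ← Real.exp_add]; norm_num
      _ ≤ Real.log x := hlogx
  have hs36 : (36 : ℝ) ≤ s := le_trans h36 hs15
  have ht30 : (30 : ℝ) ≤ t := by
    rw [ht]
    calc (30 : ℝ) = Real.log (Real.exp 30) := (Real.log_exp 30).symm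
      _ ≤ Real.log (Real.log x) := Real.log_le_log (Real.exp_pos _) hlogx
  have hsq : s ^ 2 = Real.log x := Real.sq_sqrt (le_of_lt hlogx0)
  have hβpos : (0 : ℝ) < β := Real.exp_pos _
  have hLpos : (0 : ℝ) < L := Real.exp_pos _
  have hβ2 : (2 : ℝ) ≤ β := by
    calc (2 : ℝ) ≤ Real.exp 1 := he1
      _ ≤ β := Real.exp_le_exp.mpr (by nlinarith)
  have hβsq : β ^ 2 = Real.exp (20 * s) := by
    rw [hβ, sq, ← Real.exp_add]; ring_nf
  have hx2β : 2 * β ^ 2 ≤ x := by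
    have h1 : 2 * β ^ 2 ≤ Real.exp (1 + 20 * s) := by
      rw [Real.exp_add, hβsq]; nlinarith [Real.exp_pos (20 * s)]
    have h2 : (1 + 20 * s : ℝ) ≤ s ^ 2 := by nlinarith
    calc 2 * β ^ 2 ≤ Real.exp (1 + 20 * s) := h1
      _ ≤ Real.exp (s ^ 2) := Real.exp_le_exp.mpr h2
      _ = x := by rw [hsq, Real.exp_log hx0]
  have h4βL : 4 * β ^ 2 < L := by
    have h4 : (4 : ℝ) ≤ Real.exp 2 := by
      rw [show (2 : ℝ) = 1 + 1 by norm_num, Real.exp_add]; nlinarith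
    have h1 : 4 * β ^ 2 ≤ Real.exp (2 + 20 * s) := by
      rw [Real.exp_add, hβsq]; nlinarith [Real.exp_pos (20 * s)]
    have hts : (2 + 20 * s : ℝ) < t * s := by
      nlinarith [mul_le_mul_of_nonneg_right ht30 (by linarith : (0:ℝ) ≤ s)]
    calc 4 * β ^ 2 ≤ Real.exp (2 + 20 * s) := h1
      _ < Real.exp (t * s) := Real.exp_lt_exp.mpr hts
      _ = L := hL.symm
  -- notation for the two finsets
  set S : Finset ℕ := (Finset.Icc 1 ⌊x - 1⌋₊).filter (fun m => f m = -f (m + 1)) with hS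
  have hq0 : 0 < q := hq.pos
  have hp0 : 0 < p := hp.pos
  classical
  set N : ℕ → Finset ℕ := fun j =>
    (Finset.Ioc j (j + q)) ∪ (Finset.Ico (q * (j / p)) (q * (j / p) + q)) with hN
  -- the subset claim
  have hsub : ∀ n ∈ (Finset.Icc 1 ⌊x⌋₊).filter (fun n : ℕ =>
      x / (2 * β) ≤ (n : ℝ) ∧ (n : ℝ) ≤ x / β ∧ f n = -f ⌊(p : ℝ) * n / q⌋₊),
      n ∈ S.biUnion N := by
    intro n hn
    simp only [Finset.mem_filter, Finset.mem_Icc] at hn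
    obtain ⟨⟨hn1, _⟩, hnlo, hnhi, hnf⟩ := hn
    have hn0 : 0 < n := hn1
    -- q ≤ n
    have hβxβ : β ≤ x / (2 * β) := by
      rw [le_div_iff₀ (by positivity)]; nlinarith
    have hqn : q ≤ n := by
      have : (q : ℝ) ≤ (n : ℝ) := le_trans hqβ (le_trans hβxβ hnlo)
      exact_mod_cast this
    obtain ⟨m, hm⟩ : ∃ m, m = n / q := ⟨_, rfl⟩
    obtain ⟨r, hr⟩ : ∃ r, r = n % q := ⟨_, rfl⟩
    have hnm : q * m + r = n := by rw [hm, hr]; exact Nat.div_add_mod n q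
    have hrq : r < q := by rw [hr]; exact Nat.mod_lt n hq0
    have hm1 : 1 ≤ m := by rw [hm]; exact (Nat.one_le_div_iff hq0).mpr hqn
    -- floor computation
    have hfloor : ⌊(p : ℝ) * n / q⌋₊ = p * n / q := by
      rw [show ((p : ℝ) * n) = ((p * n : ℕ) : ℝ) by push_cast; ring,
        Nat.floor_div_natCast, Nat.floor_natCast]
    obtain ⟨k, hkdef⟩ : ∃ k, k = p * n / q := ⟨_, rfl⟩
    have hk : k = p * m + p * r / q := by
      have h1 : p * n = q * (p * m) + p * r := by rw [← hnm]; ring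
      rw [hkdef, h1, Nat.mul_add_div hq0]
    have hprq : p * r / q < p := by
      rw [Nat.div_lt_iff_lt_mul hq0]
      exact mul_lt_mul_of_pos_left hrq hp0
    rw [hfloor, ← hkdef] at hnf
    have hnx : (n : ℝ) ≤ x := le_trans hnhi (by
      rw [div_le_iff₀ hβpos]; nlinarith)
    by_cases hA : f n = f (q * m)
    · -- sign change near p*m
      have hqm : f (q * m) = f (p * m) := by
        rw [hmul, hmul, hfpq]
      have hpm1 : 1 ≤ p * m := Nat.one_le_iff_ne_zero.mpr (by positivity)
      have hk1 : 1 ≤ k := by rw [hk]; exact le_trans hpm1 (Nat.le_add_right _ _)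
      have hne : f (p * m) ≠ f k := by
        intro h
        have h1 : f n = -f k := hnf
        have h2 : f n = f k := by rw [hA, hqm, h]
        rcases hpm k hk1 with h3 | h3 <;> rw [h3] at h1 h2 <;> omega
      obtain ⟨j, hj1, hj2, hj3⟩ := sign_change_exists f hpm k (p * m) hpm1 (by rw [hk]; exact Nat.le_add_right _ _) hne
      have hjm : j / p = m := by
        refine Nat.div_eq_of_lt_le (by rw [mul_comm]; omega) ?_
        have h1 : j < p * m + p := by
          have h0 := hj2; rw [hk] at h0; omega
        calc j < p * m + p := h1
          _ = (m + 1) * p := by ring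
      have hkx : (k : ℝ) < 2 * n := by
        have h1 : (k : ℝ) ≤ (p : ℝ) * n / q := by
          rw [hkdef, ← hfloor]; exact Nat.floor_le (by positivity)
        have h2 : (p : ℝ) * n / q = ((p : ℝ) / q) * n := by ring
        have h3 : ((p : ℝ) / q) * n < 2 * n := by
          apply mul_lt_mul_of_pos_right hhigh
          exact_mod_cast hn0
        linarith
      have hjS : j ∈ S := by
        rw [hS, Finset.mem_filter, Finset.mem_Icc]
        refine ⟨⟨by omega, Nat.le_floor ?_⟩, hj3⟩
        have hjk : (j : ℝ) + 1 ≤ (k : ℝ) := by exact_mod_cast hj2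
        have h2n : 2 * (n : ℝ) ≤ x := by
          have h1 : (n : ℝ) * β ≤ x := (le_div_iff₀ hβpos).mp hnhi
          have h2 : (0 : ℝ) ≤ (n : ℝ) := Nat.cast_nonneg n
          nlinarith
        linarith
      refine Finset.mem_biUnion.mpr ⟨j, hjS, Finset.mem_union_right _ ?_⟩
      rw [Finset.mem_Ico, hjm]
      omega
    · -- sign change near n
      have hqm1 : 1 ≤ q * m := Nat.one_le_iff_ne_zero.mpr (by positivity)
      obtain ⟨j, hj1, hj2, hj3⟩ := sign_change_exists f hpm n (q * m) hqm1 (by omega)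
        (fun h => hA h.symm)
      have hjS : j ∈ S := by
        rw [hS, Finset.mem_filter, Finset.mem_Icc]
        refine ⟨⟨by omega, Nat.le_floor ?_⟩, hj3⟩
        have hjn : (j : ℝ) + 1 ≤ (n : ℝ) := by exact_mod_cast hj2
        linarith
      refine Finset.mem_biUnion.mpr ⟨j, hjS, Finset.mem_union_left _ ?_⟩
      rw [Finset.mem_Ioc]
      omega
  -- cardinality bound
  have hNcard : ∀ j, (N j).card ≤ 2 * q := by
    intro j
    calc (N j).card ≤ (Finset.Ioc j (j + q)).card +
        (Finset.Ico (q * (j / p)) (q * (j / p) + q)).card := Finset.card_union_le _ _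
      _ ≤ 2 * q := by rw [Nat.card_Ioc, Nat.card_Ico]; omega
  have hcard : ((Finset.Icc 1 ⌊x⌋₊).filter (fun n : ℕ =>
      x / (2 * β) ≤ (n : ℝ) ∧ (n : ℝ) ≤ x / β ∧ f n = -f ⌊(p : ℝ) * n / q⌋₊)).card
      ≤ S.card * (2 * q) := by
    calc ((Finset.Icc 1 ⌊x⌋₊).filter _).card ≤ (S.biUnion N).card :=
          Finset.card_le_card hsub
      _ ≤ ∑ j ∈ S, (N j).card := Finset.card_biUnion_le
      _ ≤ S.card * (2 * q) := by
          simpa using Finset.sum_le_card_nsmul S _ (2 * q) (fun j _ => hNcard j)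
  -- conclude
  have hScast : (S.card : ℝ) ≤ x / L ^ 7 := hcount
  have hq2 : (0 : ℝ) ≤ 2 * (q : ℝ) := by positivity
  calc (((Finset.Icc 1 ⌊x⌋₊).filter (fun n : ℕ =>
        x / (2 * β) ≤ (n : ℝ) ∧ (n : ℝ) ≤ x / β ∧ f n = -f ⌊(p : ℝ) * n / q⌋₊)).card : ℝ)
      ≤ (S.card : ℝ) * (2 * q) := by exact_mod_cast hcard
    _ ≤ (x / L ^ 7) * (2 * β) := by
        apply mul_le_mul hScast (by linarith) hq2 (by positivity)
    _ < x / (2 * β) / (L ^ 3) ^ 2 := by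
        rw [show ((L ^ 3) ^ 2 : ℝ) = L ^ 6 by ring, div_div,
          div_mul_eq_mul_div, div_lt_div_iff₀ (by positivity) (by positivity)]
        have key : 4 * β ^ 2 * (x * L ^ 6) < L * (x * L ^ 6) :=
          mul_lt_mul_of_pos_right h4βL (by positivity)
        calc x * (2 * β) * (2 * β * L ^ 6) = 4 * β ^ 2 * (x * L ^ 6) := by ring
          _ < L * (x * L ^ 6) := key
          _ = x * L ^ 7 := by ring
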